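/- Suppose S is bounded above, so that T := inf{i ≥ 1 : R_i ∉ S} is finite for every outcome. Let θ ∈ S, let C ∈ (θ, ∞], set b := sup(S ∩ [θ, C)) and δ := Leb₁([θ, b) \ S). Then ℙ(R_T < b) ≤ δ/w. -/
import Mathlib


open MeasureTheory ProbabilityTheory Set
open scoped ENNReal

/-- The right stepping-out points `R_i := θ − u + i·w`. -/
def Rpt (θ u w : ℝ) (i : ℕ) : ℝ := θ - u + i * w

/-- The exit index `T := inf{i ≥ 1 : R_i ∉ S}`. -/
noncomputable def exitT (S : Set ℝ) (θ u w : ℝ) : ℕ :=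
  sInf {i : ℕ | 1 ≤ i ∧ Rpt θ u w i ∉ S}

/-- If `S` is bounded above (so that `T` is finite for every outcome), `θ ∈ S`,
`C ∈ (θ, ∞]`, `b := sup(S ∩ [θ, C))` and `δ := Leb₁([θ, b) \ S)`, then
`ℙ(R_T < b) ≤ δ/w`. -/
theorem stmt2 {Ω : Type*} [MeasurableSpace Ω] (P : Measure Ω) [IsProbabilityMeasure P]
    (w : ℝ) (hw : 0 < w) (S : Set ℝ) (hSmeas : MeasurableSet S) (hSb : BddAbove S)
    (Υ : Ω → ℝ) (hΥmeas : Measurable Υ)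
    (hΥ : Measure.map Υ P = (ENNReal.ofReal w)⁻¹ • volume.restrict (Ioo 0 w))
    (θ : ℝ) (hθ : θ ∈ S) (C : EReal) (hC : (θ : EReal) < C)
    (b : ℝ) (hb : b = sSup (S ∩ {x : ℝ | θ ≤ x ∧ (x : EReal) < C}))
    (δ : ℝ) (hδ : δ = (volume (Ico θ b \ S)).toReal) :
    P {ω | Rpt θ (Υ ω) w (exitT S θ (Υ ω) w) < b} ≤ ENNReal.ofReal (δ / w) := by
  classical
  set A : Set ℝ := Ico θ b \ S with hA
  have hAmeas : MeasurableSet A := measurableSet_Ico.diff hSmeas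
  have hAvol : volume A ≠ ⊤ := by
    refine ne_top_of_le_ne_top ?_ (measure_mono diff_subset)
    simp [Real.volume_Ico]
  have hwE0 : (ENNReal.ofReal w) ≠ 0 := by simp [hw, hw.le]
  have hwET : (ENNReal.ofReal w) ≠ ⊤ := ENNReal.ofReal_ne_top
  have hδ' : ENNReal.ofReal δ = volume A := by
    rw [hδ, ENNReal.ofReal_toReal hAvol]
  -- The events R_{i+1} ∈ A
  set F : ℕ → Set Ω := fun i => {ω | Rpt θ (Υ ω) w (i + 1) ∈ A} with hF
  -- Inclusion of the target event into ⋃ F i, up to the null set where Υ ∉ (0, w)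
  have hsub : {ω | Rpt θ (Υ ω) w (exitT S θ (Υ ω) w) < b}
      ⊆ (⋃ i, F i) ∪ (Υ ⁻¹' (Ioo 0 w))ᶜ := by
    intro ω hω
    by_cases hG : Υ ω ∈ Ioo 0 w
    · left
      obtain ⟨M, hM⟩ := hSb
      obtain ⟨n, hn⟩ := exists_nat_gt ((M - θ + Υ ω) / w)
      have hne : {i : ℕ | 1 ≤ i ∧ Rpt θ (Υ ω) w i ∉ S}.Nonempty := by
        refine ⟨n + 1, Nat.le_add_left _ _, fun hmem => ?_⟩
        have hle := hM hmem
        have h2 : M - θ + Υ ω < n * w := (div_lt_iff₀ hw).mp hn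
        simp only [Rpt, Nat.cast_add, Nat.cast_one] at hle
        nlinarith [hG.1, hG.2]
      have hT : 1 ≤ exitT S θ (Υ ω) w ∧ Rpt θ (Υ ω) w (exitT S θ (Υ ω) w) ∉ S :=
        Nat.sInf_mem hne
      obtain ⟨hT1, hTnot⟩ := hT
      refine mem_iUnion.mpr ⟨exitT S θ (Υ ω) w - 1, ?_⟩
      have hTeq : exitT S θ (Υ ω) w - 1 + 1 = exitT S θ (Υ ω) w :=
        Nat.succ_pred_eq_of_pos hT1
      simp only [hF, mem_setOf_eq, hTeq]
      refine ⟨⟨?_, hω⟩, hTnot⟩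
      have h1T : (1 : ℝ) ≤ (exitT S θ (Υ ω) w : ℝ) := by exact_mod_cast hT1
      have := hG.2
      simp only [Rpt]
      nlinarith
    · right; exact hG
  have hnull : P ((Υ ⁻¹' (Ioo 0 w))ᶜ) = 0 := by
    have h1 : P (Υ ⁻¹' (Ioo 0 w)) = 1 := by
      rw [← Measure.map_apply hΥmeas measurableSet_Ioo, hΥ]
      simp only [Measure.smul_apply, smul_eq_mul,
        Measure.restrict_apply measurableSet_Ioo, inter_self, Real.volume_Ioo, sub_zero]
      exact ENNReal.inv_mul_cancel hwE0 hwET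
    rw [measure_compl (hΥmeas measurableSet_Ioo) (measure_ne_top _ _), h1,
      measure_univ, tsub_self]
  -- Compute P (F i)
  have hPF : ∀ i : ℕ, P (F i)
      = (ENNReal.ofReal w)⁻¹ * volume (A ∩ Ioo (θ + i * w) (θ + (i + 1) * w)) := by
    intro i
    set c : ℝ := θ + (i + 1) * w with hc
    have hg : Measurable fun u : ℝ => c - u := measurable_const.sub measurable_id
    have hFi : F i = Υ ⁻¹' ((fun u : ℝ => c - u) ⁻¹' A) := by
      ext ω
      have he : θ - Υ ω + ((i : ℕ) + 1 : ℕ) * w = c - Υ ω := by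
        rw [hc]; push_cast; ring
      simp only [hF, mem_setOf_eq, mem_preimage, Rpt, he]
    rw [hFi, ← Measure.map_apply hΥmeas (hg hAmeas), hΥ]
    simp only [Measure.smul_apply, smul_eq_mul,
      Measure.restrict_apply (hg hAmeas)]
    congr 1
    have hset : (fun u : ℝ => c - u) ⁻¹' A ∩ Ioo 0 w
        = (fun u : ℝ => c - u) ⁻¹' (A ∩ Ioo (θ + i * w) (θ + (i + 1) * w)) := by
      ext u
      simp only [mem_inter_iff, mem_preimage, mem_Ioo, hc]
      constructor
      · rintro ⟨hu, h0, hwu⟩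
        refine ⟨hu, by nlinarith, by nlinarith⟩
      · rintro ⟨hu, h1, h2⟩
        exact ⟨hu, by nlinarith, by nlinarith⟩
    rw [hset]
    exact (Measure.measurePreserving_sub_left volume c).measure_preimage
      (hAmeas.inter measurableSet_Ioo).nullMeasurableSet
  -- The intervals are pairwise disjoint
  have hdisj : Pairwise (Function.onFun Disjoint
      fun i : ℕ => A ∩ Ioo (θ + i * w) (θ + (i + 1) * w)) := by
    refine (pairwise_disjoint_on _).mpr fun i j h => ?_
    refine Disjoint.mono inter_subset_right inter_subset_right ?_
    rw [Set.disjoint_left]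
    rintro x ⟨_, hx2⟩ ⟨hx3, _⟩
    have : (i : ℝ) + 1 ≤ (j : ℝ) := by exact_mod_cast h
    nlinarith
  calc P {ω | Rpt θ (Υ ω) w (exitT S θ (Υ ω) w) < b}
      ≤ P ((⋃ i, F i) ∪ (Υ ⁻¹' (Ioo 0 w))ᶜ) := measure_mono hsub
    _ ≤ P (⋃ i, F i) + P ((Υ ⁻¹' (Ioo 0 w))ᶜ) := measure_union_le _ _
    _ = P (⋃ i, F i) := by rw [hnull, add_zero]
    _ ≤ ∑' i, P (F i) := measure_iUnion_le F
    _ = (ENNReal.ofReal w)⁻¹ * ∑' (i : ℕ), volume (A ∩ Ioo (θ + (i : ℝ) * w) (θ + ((i : ℝ) + 1) * w)) := by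
        simp_rw [hPF]; rw [ENNReal.tsum_mul_left]
    _ ≤ (ENNReal.ofReal w)⁻¹ * volume A := by
        gcongr
        rw [← measure_iUnion hdisj
          (fun i => hAmeas.inter measurableSet_Ioo)]
        exact measure_mono (iUnion_subset fun i => inter_subset_left)
    _ = ENNReal.ofReal (δ / w) := by
        rw [ENNReal.ofReal_div_of_pos hw, hδ', ENNReal.div_eq_inv_mul]
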